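/- Let H be a finite-dimensional real inner product space, A: H → H a symmetric positive definite operator, and let H = Σ_i V_i be a decomposition into subspaces with inclusions I_i: V_i → H. Let A_i: V_i → V_i denote the restriction defined by ⟨A_i u_i, v_i⟩ = ⟨A I_i u_i, I_i v_i⟩, and define D⁻¹ := Σ_i I_i A_i⁻¹ I_i*. Then D⁻¹ is symmetric positive definite, and for all u ∈ H, ⟨D u, u⟩ = min{ Σ_i ⟨A u_i, u_i⟩ : u = Σ_i u_i, u_i ∈ V_i }. -/

import Mathlib

open RealInnerProductSpace

/-- The additive Schwarz (parallel subspace correction) lemma: the operator `D`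
built from exact subspace solves is SPD and `⟨D u, u⟩` is the minimal sum of
`A`-energies over all splittings of `u` along the subspaces `V i`. -/
theorem stmt_17 {H : Type*} [NormedAddCommGroup H] [InnerProductSpace ℝ H]
    [FiniteDimensional ℝ H]
    (A : H →ₗ[ℝ] H)
    (hAsymm : ∀ u v : H, ⟪A u, v⟫ = ⟪u, A v⟫)
    (hApos : ∀ u : H, u ≠ 0 → 0 < ⟪A u, u⟫)
    {ι : Type*} [Fintype ι] (V : ι → Submodule ℝ H)
    (hspan : ∀ u : H, ∃ w : (i : ι) → V i, ∑ i, ((w i : H)) = u)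
    (Ai : (i : ι) → (V i →ₗ[ℝ] V i))
    (hAi : ∀ (i : ι) (ui vi : V i), ⟪Ai i ui, vi⟫ = ⟪A (ui : H), (vi : H)⟫)
    (AiInv : (i : ι) → (V i →ₗ[ℝ] V i))
    (hAiInv : ∀ i, AiInv i ∘ₗ Ai i = LinearMap.id ∧ Ai i ∘ₗ AiInv i = LinearMap.id)
    (Dinv : H →ₗ[ℝ] H)
    (hDinv : Dinv = ∑ i, (V i).subtype ∘ₗ AiInv i ∘ₗ
      ((Submodule.orthogonalProjectionOnto (V i)).toLinearMap))
    (D : H →ₗ[ℝ] H)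
    (hD : D ∘ₗ Dinv = LinearMap.id ∧ Dinv ∘ₗ D = LinearMap.id) :
    (∀ u v : H, ⟪Dinv u, v⟫ = ⟪u, Dinv v⟫) ∧
    (∀ u : H, u ≠ 0 → 0 < ⟪Dinv u, u⟫) ∧
    (∀ u : H, IsLeast
      {t : ℝ | ∃ w : (i : ι) → V i, ∑ i, ((w i : H)) = u ∧
        t = ∑ i, ⟪A ((w i : H)), ((w i : H))⟫} ⟪D u, u⟫) := by
  classical
  -- notation
  set P := fun i => (Submodule.orthogonalProjectionOnto (V i)).toLinearMap with hPdef
  -- apply of Dinv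
  have hDinvApply : ∀ v : H, Dinv v = ∑ i, ((AiInv i (P i v) : H)) := by
    intro v
    rw [hDinv]
    simp [LinearMap.sum_apply, LinearMap.comp_apply, hPdef]
  have hAiAiInv : ∀ i (x : V i), Ai i (AiInv i x) = x := by
    intro i x
    have := (hAiInv i).2
    exact DFunLike.congr_fun this x
  have hAiInvAi : ∀ i (x : V i), AiInv i (Ai i x) = x := by
    intro i x
    exact DFunLike.congr_fun (hAiInv i).1 x
  -- symmetry of Ai
  have hAisymm : ∀ i (x y : V i), ⟪Ai i x, y⟫ = ⟪x, Ai i y⟫ := by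
    intro i x y
    rw [hAi, hAsymm, real_inner_comm, ← hAi, real_inner_comm]
  -- symmetry of AiInv
  have hAiInvSymm : ∀ i (x y : V i), ⟪AiInv i x, y⟫ = ⟪x, AiInv i y⟫ := by
    intro i x y
    calc ⟪AiInv i x, y⟫ = ⟪AiInv i x, Ai i (AiInv i y)⟫ := by rw [hAiAiInv]
      _ = ⟪Ai i (AiInv i x), AiInv i y⟫ := (hAisymm i _ _).symm
      _ = ⟪x, AiInv i y⟫ := by rw [hAiAiInv]
  -- key: pairing of coerced subspace element against ambient vector
  have hPkey : ∀ i (x : V i) (v : H), ⟪(x : H), v⟫ = ⟪x, P i v⟫ := by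
    intro i x v
    simp only [hPdef, ContinuousLinearMap.coe_coe]
    exact (Submodule.inner_orthogonalProjectionOnto_eq_of_mem_left (K := V i) x v).symm
  -- the central identity
  have hkey : ∀ (v : H) (i : ι) (y : V i),
      ⟪A ((AiInv i (P i v) : H)), (y : H)⟫ = ⟪v, (y : H)⟫ := by
    intro v i y
    rw [← hAi, hAiAiInv, real_inner_comm, ← hPkey, real_inner_comm]
  -- symmetry of Dinv
  have hsymm : ∀ u v : H, ⟪Dinv u, v⟫ = ⟪u, Dinv v⟫ := by
    intro u v
    rw [hDinvApply u, hDinvApply v, sum_inner, inner_sum]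
    refine Finset.sum_congr rfl fun i _ => ?_
    rw [hPkey i _ v, hAiInvSymm, real_inner_comm, ← hPkey, real_inner_comm]
  -- positivity of Ai
  have hAipos : ∀ i (x : V i), x ≠ 0 → 0 < ⟪Ai i x, x⟫ := by
    intro i x hx
    rw [hAi]
    exact hApos _ (by simpa using hx)
  -- positivity of AiInv
  have hAiInvPos : ∀ i (x : V i), x ≠ 0 → 0 < ⟪AiInv i x, x⟫ := by
    intro i x hx
    have hne : AiInv i x ≠ 0 := by
      intro h
      apply hx
      have := congrArg (Ai i) h
      rw [hAiAiInv] at this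
      simpa using this
    calc (0:ℝ) < ⟪Ai i (AiInv i x), AiInv i x⟫ := hAipos i _ hne
      _ = ⟪AiInv i x, Ai i (AiInv i x)⟫ := real_inner_comm _ _
      _ = ⟪AiInv i x, x⟫ := by rw [hAiAiInv]
  -- quadratic form of Dinv
  have hDinvQuad : ∀ u : H, ⟪Dinv u, u⟫ = ∑ i, ⟪AiInv i (P i u), P i u⟫ := by
    intro u
    rw [hDinvApply, sum_inner]
    refine Finset.sum_congr rfl fun i _ => hPkey i _ u
  have hpos : ∀ u : H, u ≠ 0 → 0 < ⟪Dinv u, u⟫ := by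
    intro u hu
    rw [hDinvQuad]
    have hnn : ∀ i : ι, 0 ≤ ⟪AiInv i (P i u), P i u⟫ := by
      intro i
      rcases eq_or_ne (P i u) 0 with h | h
      · simp [h]
      · exact le_of_lt (hAiInvPos i _ h)
    -- there exists i with P i u ≠ 0
    have hex : ∃ i : ι, P i u ≠ 0 := by
      by_contra hc
      push_neg at hc
      apply hu
      obtain ⟨w, hw⟩ := hspan u
      have : ⟪u, u⟫ = 0 := by
        calc ⟪u, u⟫ = ⟪∑ i, ((w i : H)), u⟫ := by rw [hw]
          _ = ∑ i, ⟪((w i : H)), u⟫ := sum_inner _ _ _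
          _ = 0 := by
              refine Finset.sum_eq_zero fun i _ => ?_
              rw [hPkey i (w i) u, hc i, inner_zero_right]
      exact inner_self_eq_zero.mp this
    obtain ⟨i, hi⟩ := hex
    exact Finset.sum_pos' (fun j _ => hnn j) ⟨i, Finset.mem_univ i, hAiInvPos i _ hi⟩
  refine ⟨hsymm, hpos, fun u => ?_⟩
  -- minimization
  set f := D u with hf
  have hDf : Dinv f = u := DFunLike.congr_fun hD.2 u
  set w0 : (i : ι) → V i := fun i => AiInv i (P i f) with hw0
  have hw0sum : ∑ i, ((w0 i : H)) = u := by rw [← hDf, hDinvApply]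
  have hw0energy : ∀ i, ⟪A ((w0 i : H)), ((w0 i : H))⟫ = ⟪f, ((w0 i : H))⟫ :=
    fun i => hkey f i (w0 i)
  have hDuu : ⟪D u, u⟫ = ∑ i, ⟪A ((w0 i : H)), ((w0 i : H))⟫ := by
    calc ⟪D u, u⟫ = ⟪f, u⟫ := rfl
      _ = ⟪f, ∑ i, ((w0 i : H))⟫ := by rw [hw0sum]
      _ = ∑ i, ⟪f, ((w0 i : H))⟫ := inner_sum _ _ _
      _ = ∑ i, ⟪A ((w0 i : H)), ((w0 i : H))⟫ := by
          refine Finset.sum_congr rfl fun i _ => (hw0energy i).symm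
  constructor
  · exact ⟨w0, hw0sum, hDuu⟩
  · rintro t ⟨w, hwsum, rfl⟩
    -- cross term
    have hcross : ∑ i, ⟪A ((w0 i : H)), ((w i : H))⟫ = ⟪D u, u⟫ := by
      calc ∑ i, ⟪A ((w0 i : H)), ((w i : H))⟫ = ∑ i, ⟪f, ((w i : H))⟫ :=
            Finset.sum_congr rfl fun i _ => hkey f i (w i)
        _ = ⟪f, ∑ i, ((w i : H))⟫ := (inner_sum _ _ _).symm
        _ = ⟪f, u⟫ := by rw [hwsum]
        _ = ⟪D u, u⟫ := rfl
    have hnn : (0:ℝ) ≤ ∑ i, ⟪A (((w i : H)) - ((w0 i : H))), (((w i : H)) - ((w0 i : H)))⟫ := by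
      refine Finset.sum_nonneg fun i _ => ?_
      rcases eq_or_ne (((w i : H)) - ((w0 i : H))) 0 with h | h
      · simp [h]
      · exact le_of_lt (hApos _ h)
    have hexpand : ∀ i, ⟪A (((w i : H)) - ((w0 i : H))), (((w i : H)) - ((w0 i : H)))⟫
        = ⟪A ((w i : H)), ((w i : H))⟫ - 2 * ⟪A ((w0 i : H)), ((w i : H))⟫
          + ⟪A ((w0 i : H)), ((w0 i : H))⟫ := by
      intro i
      have hsymcross : ⟪A ((w i : H)), ((w0 i : H))⟫ = ⟪A ((w0 i : H)), ((w i : H))⟫ := by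
        rw [hAsymm, real_inner_comm]
      rw [map_sub, inner_sub_left, inner_sub_right, inner_sub_right, hsymcross]
      ring
    rw [Finset.sum_congr rfl (fun i _ => hexpand i)] at hnn
    rw [Finset.sum_add_distrib, Finset.sum_sub_distrib, ← Finset.mul_sum, hcross, ← hDuu] at hnn
    linarith
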